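/- Let A be a prime unital C*-algebra and let a, b ∈ A be such that r(a·x) ≤ r(b·x) for all x ∈ A. Define f : A → A by f(x) = a·x·b*·b − b·x·b*·a. Then f(x)·y·b* + f(y)·x·b* = 0 for all x, y ∈ A. -/

import Mathlib

open NormedSpace

set_option maxHeartbeats 1000000 in
/-- Core lemma: if `r(p t) ≤ r(q t)` for all `t` in a unital C*-algebra, then `p q = q p`. -/
private lemma commute_of_forall_spectralRadius_le
    {A : Type*} [NormedRing A] [StarRing A] [CStarRing A] [CompleteSpace A]
    [NormedAlgebra ℂ A] [StarModule ℂ A] [Nontrivial A]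
    (p q : A) (hpq : ∀ t : A, spectralRadius ℂ (p * t) ≤ spectralRadius ℂ (q * t)) :
    p * q = q * p := by
  letI : CStarAlgebra A := { }
  let +nondep : NormedAlgebra ℚ A := .restrictScalars ℚ ℂ A
  -- basic exponential facts
  have hE : ∀ l m : ℂ, exp (l • q) * exp (m • q) = exp ((l + m) • q) := by
    intro l m
    rw [add_smul, exp_add_of_commute (((Commute.refl q).smul_left l).smul_right m)]
  have hE0 : exp ((0 : ℂ) • q) = 1 := by rw [zero_smul, exp_zero]
  have hval : ∀ l : ℂ, exp (l • q) * exp (-(l • q)) = 1 := by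
    intro l; rw [← neg_smul, hE, add_neg_cancel, hE0]
  have hinv : ∀ l : ℂ, exp (-(l • q)) * exp (l • q) = 1 := by
    intro l; rw [← neg_smul, hE, neg_add_cancel, hE0]
  have hqE : ∀ l : ℂ, q * exp (-(l • q)) = exp (-(l • q)) * q := by
    intro l
    exact ((((Commute.refl q).smul_right l).neg_right).exp_right).eq
  -- conjugation invariance of the spectral radius
  have hconj : ∀ u v c : A, u * v = 1 → v * u = 1 →
      spectralRadius ℂ (u * c * v) = spectralRadius ℂ c := by
    intro u v c huv hvu
    have hspec : spectrum ℂ (u * c * v) = spectrum ℂ c :=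
      spectrum.units_conjugate (u := ⟨u, v, huv, hvu⟩)
    unfold spectralRadius
    rw [hspec]
  -- the key inequality for the conjugated family
  have hkey : ∀ (l : ℂ) (t : A),
      spectralRadius ℂ ((exp (l • q) * p * exp (-(l • q))) * t)
        ≤ spectralRadius ℂ (q * t) := by
    intro l t
    have e1 : (exp (l • q) * p * exp (-(l • q))) * t
        = exp (l • q) * (p * (exp (-(l • q)) * t * exp (l • q))) * exp (-(l • q)) := by
      simp [mul_assoc, hval l]
    have e2 : q * (exp (-(l • q)) * t * exp (l • q))
        = exp (-(l • q)) * (q * t) * exp (l • q) := by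
      simp only [← mul_assoc, hqE]
    calc spectralRadius ℂ ((exp (l • q) * p * exp (-(l • q))) * t)
        = spectralRadius ℂ (p * (exp (-(l • q)) * t * exp (l • q))) := by
          rw [e1, hconj _ _ _ (hval l) (hinv l)]
      _ ≤ spectralRadius ℂ (q * (exp (-(l • q)) * t * exp (l • q))) := hpq _
      _ = spectralRadius ℂ (q * t) := by rw [e2, hconj _ _ _ (hinv l) (hval l)]
  -- uniform norm bound for the conjugated family, via the C*-identity
  have hnorm : ∀ l : ℂ, ‖exp (l • q) * p * exp (-(l • q))‖ ≤ ‖q‖ := by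
    intro l
    set c : A := exp (l • q) * p * exp (-(l • q)) with hc
    have h2 : spectralRadius ℂ (c * star c) = (‖c * star c‖₊ : ENNReal) :=
      (IsSelfAdjoint.mul_star_self c).spectralRadius_eq_nnnorm
    have h5 : (‖c‖₊ : ENNReal) * ‖c‖₊ ≤ (‖q‖₊ : ENNReal) * ‖c‖₊ := by
      calc (‖c‖₊ : ENNReal) * ‖c‖₊ = (‖c * star c‖₊ : ENNReal) := by
            rw [CStarRing.nnnorm_self_mul_star, ENNReal.coe_mul]
        _ = spectralRadius ℂ (c * star c) := h2.symm
        _ ≤ spectralRadius ℂ (q * star c) := by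
            have := hkey l (star c); rwa [← hc] at this
        _ ≤ (‖q * star c‖₊ : ENNReal) := spectrum.spectralRadius_le_nnnorm _
        _ ≤ (‖q‖₊ : ENNReal) * ‖c‖₊ := by
            rw [← ENNReal.coe_mul]
            exact ENNReal.coe_le_coe.2 <| by
              calc ‖q * star c‖₊ ≤ ‖q‖₊ * ‖star c‖₊ := nnnorm_mul_le _ _
                _ = ‖q‖₊ * ‖c‖₊ := by rw [nnnorm_star]
    have h6 : ‖c‖ * ‖c‖ ≤ ‖q‖ * ‖c‖ := by exact_mod_cast h5
    nlinarith [norm_nonneg c, norm_nonneg q]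
  -- Liouville: the entire family is constant
  have d1 : Differentiable ℂ (fun l : ℂ => exp (l • q)) :=
    fun l => (hasDerivAt_exp_smul_const q l).differentiableAt
  have d2 : Differentiable ℂ (fun l : ℂ => exp (-(l • q))) := by
    have h' := d1.comp differentiable_neg
    have he : (fun l : ℂ => exp (-(l • q))) = (fun l : ℂ => exp (l • q)) ∘ Neg.neg := by
      funext l; simp [Function.comp, neg_smul]
    rw [he]; exact h'
  have hdiff : Differentiable ℂ (fun l : ℂ => exp (l • q) * p * exp (-(l • q))) :=
    (d1.mul_const p).mul d2
  have hbd : Bornology.IsBounded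
      (Set.range fun l : ℂ => exp (l • q) * p * exp (-(l • q))) := by
    rw [isBounded_iff_forall_norm_le]
    exact ⟨‖q‖, by rintro _ ⟨l, rfl⟩; exact hnorm l⟩
  have hconst : ∀ l : ℂ, exp (l • q) * p * exp (-(l • q)) = p := by
    intro l
    have := hdiff.apply_eq_apply_of_bounded hbd l 0
    simpa [zero_smul, neg_zero, exp_zero] using this
  -- commutation of `p` with the exponentials
  have hcomm : ∀ l : ℂ, exp (l • q) * p = p * exp (l • q) := by
    intro l
    have h2 : exp (l • q) * p * exp (-(l • q)) * exp (l • q) = p * exp (l • q) := by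
      rw [hconst l]
    rwa [mul_assoc (exp (l • q) * p), hinv l, mul_one] at h2
  -- differentiate at 0
  have hd1 : HasDerivAt (fun l : ℂ => exp (l • q) * p) (q * p) 0 := by
    simpa [zero_smul, exp_zero] using (hasDerivAt_exp_smul_const q (0 : ℂ)).mul_const p
  have hd2 : HasDerivAt (fun l : ℂ => p * exp (l • q)) (p * q) 0 := by
    simpa [zero_smul, exp_zero] using HasDerivAt.const_mul p (hasDerivAt_exp_smul_const q (0 : ℂ))
  have hfe : (fun l : ℂ => exp (l • q) * p) = fun l : ℂ => p * exp (l • q) :=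
    funext hcomm
  rw [hfe] at hd1
  exact hd2.unique hd1

/-- Theorem 3.8, Claim 2: In a prime unital C*-algebra, if `r(a x) ≤ r(b x)`
for all `x`, then `f(x) = a x b* b − b x b* a` satisfies
`f(x) y b* + f(y) x b* = 0` for all `x, y`. -/
theorem functional_identity_of_spectralRadius_le
    {A : Type*} [NormedRing A] [StarRing A] [CStarRing A] [CompleteSpace A]
    [NormedAlgebra ℂ A] [StarModule ℂ A]
    (hprime : ∀ a b : A, (∀ x : A, a * x * b = 0) → a = 0 ∨ b = 0)
    (a b : A)
    (h : ∀ x : A, spectralRadius ℂ (a * x) ≤ spectralRadius ℂ (b * x))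
    (f : A → A)
    (hf : ∀ x : A, f x = a * x * (star b) * b - b * x * (star b) * a) :
    ∀ x y : A, f x * y * (star b) + f y * x * (star b) = 0 := by
  rcases subsingleton_or_nontrivial A with hA | hA
  · intro x y; exact Subsingleton.elim _ _
  · -- the key commutation relation
    have comm : ∀ z : A, (a * z * star b) * (b * z * star b)
        = (b * z * star b) * (a * z * star b) := by
      intro z
      refine commute_of_forall_spectralRadius_le (a * z * star b) (b * z * star b) ?_
      intro t
      simpa only [mul_assoc] using h (z * (star b * t))
    intro x y
    rw [hf x, hf y]
    have h1 := comm x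
    have h2 := comm y
    have h3 := comm (x + y)
    have expand : (a * x * star b * b - b * x * star b * a) * y * star b
          + (a * y * star b * b - b * y * star b * a) * x * star b
        = (a * (x + y) * star b) * (b * (x + y) * star b)
            - (b * (x + y) * star b) * (a * (x + y) * star b)
          - ((a * x * star b) * (b * x * star b) - (b * x * star b) * (a * x * star b))
          - ((a * y * star b) * (b * y * star b) - (b * y * star b) * (a * y * star b)) := by
      noncomm_ring
    rw [expand, h1, h2, h3]
    simp
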